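/- Let d ≥ 1 and b ∈ ℝ. Index coordinates of E = ℝ^I by I = {(i,j) : 1 ≤ i ≤ j ≤ d}. For 1 ≤ r ≤ d, let μ⃗_r ∈ E be the vector such that ⟨q, μ⃗_r⟩ = b·q_{r,r} − q_{r,d} + b·∑_{s=1}^{r−1}(q_{s,r} − q_{s,r−1}) for all q ∈ E. For a subset T ⊆ {1,…,d}, let S_T denote the sum of coordinates over the admissible subset J(T) = { (i,j) ∈ I : i ≤ #T and j > d − t_i }, where t₁ > ⋯ > t_{#T} are the elements of T. Then S_T(μ⃗_r) = b·𝟙_T(d+1−r) − 𝟙[#T ≥ r], where 𝟙_T is the indicator of T and 𝟙[#T ≥ r] is 1 if #T ≥ r and 0 otherwise. Moreover, if δ⃗ ∈ E is the vector with ⟨q, δ⃗⟩ = b·∑_{(i,j)∈I} q_{i,j} + ∑_{i=1}^d (2i−1−d−bi)·q_{i,d}, then S_T(δ⃗) = b·( ∑_{t∈T} t − #T(#T+1)/2 ) − #T·(d − #T). -/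

import Mathlib

/-- The triangular index set `I = {(i,j) : 1 ≤ i ≤ j ≤ d}`. -/
def triIdx (d : ℕ) : Finset (ℕ × ℕ) :=
  (Finset.Icc 1 d ×ˢ Finset.Icc 1 d).filter fun p => p.1 ≤ p.2

/-- `tElem T i` is the `i`-th largest element of `T` (for `1 ≤ i ≤ #T`). -/
def tElem (T : Finset ℕ) (i : ℕ) : ℕ :=
  (T.sort (· ≤ ·)).getD (T.card - i) 0

/-- `JofT d T = {(i,j) ∈ I : i ≤ #T and j > d − t_i}`, the admissible subset
of `I` associated to `T ⊆ {1,…,d}`. -/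
def JofT (d : ℕ) (T : Finset ℕ) : Finset (ℕ × ℕ) :=
  (triIdx d).filter fun p => p.1 ≤ T.card ∧ d - tElem T p.1 < p.2


lemma tElem_mem {T : Finset ℕ} {i : ℕ} (h1 : 1 ≤ i) (h2 : i ≤ T.card) :
    tElem T i ∈ T := by
  have hlen : (T.sort (· ≤ ·)).length = T.card := Finset.length_sort _
  have hlt : T.card - i < (T.sort (· ≤ ·)).length := by omega
  rw [tElem, List.getD_eq_getElem _ _ hlt]
  exact (Finset.mem_sort _).1 (List.getElem_mem hlt)

lemma tElem_lt_tElem {T : Finset ℕ} {i j : ℕ} (h1 : 1 ≤ i) (hij : i < j)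
    (h2 : j ≤ T.card) : tElem T j < tElem T i := by
  have hlen : (T.sort (· ≤ ·)).length = T.card := Finset.length_sort _
  have hs := (Finset.sortedLT_sort T).pairwise
  rw [List.pairwise_iff_getElem] at hs
  have hlt1 : T.card - j < (T.sort (· ≤ ·)).length := by omega
  have hlt2 : T.card - i < (T.sort (· ≤ ·)).length := by omega
  rw [tElem, tElem, List.getD_eq_getElem _ _ hlt1, List.getD_eq_getElem _ _ hlt2]
  exact hs _ _ hlt1 hlt2 (by omega)

lemma one_le_tElem {d : ℕ} {T : Finset ℕ} (hT : T ⊆ Finset.Icc 1 d) {i : ℕ}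
    (h1 : 1 ≤ i) (h2 : i ≤ T.card) : 1 ≤ tElem T i :=
  (Finset.mem_Icc.1 (hT (tElem_mem h1 h2))).1

lemma tElem_add_le {d : ℕ} {T : Finset ℕ} (hT : T ⊆ Finset.Icc 1 d) :
    ∀ i, 1 ≤ i → i ≤ T.card → tElem T i + i ≤ d + 1 := by
  intro i
  induction i with
  | zero => omega
  | succ n ih =>
    intro h1 h2
    rcases Nat.eq_zero_or_pos n with hn | hn
    · subst hn
      simp only [Nat.zero_add] at h2 ⊢
      have := (Finset.mem_Icc.1 (hT (tElem_mem le_rfl h2))).2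
      omega
    · have hlt : tElem T (n+1) < tElem T n := tElem_lt_tElem hn (by omega) h2
      have := ih hn (by omega)
      omega

lemma exists_tElem {T : Finset ℕ} {m : ℕ} (hm : m ∈ T) :
    ∃ i, 1 ≤ i ∧ i ≤ T.card ∧ tElem T i = m := by
  have hlen : (T.sort (· ≤ ·)).length = T.card := Finset.length_sort _
  have hmem : m ∈ T.sort (· ≤ ·) := (Finset.mem_sort _).2 hm
  obtain ⟨n, hn, hEq⟩ := List.getElem_of_mem hmem
  refine ⟨T.card - n, by omega, by omega, ?_⟩
  have : T.card - (T.card - n) = n := by omega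
  rw [tElem, this, List.getD_eq_getElem _ _ hn, hEq]

lemma mem_JofT {d : ℕ} {T : Finset ℕ} {s j : ℕ} :
    (s, j) ∈ JofT d T ↔
      (1 ≤ s ∧ s ≤ j ∧ j ≤ d ∧ s ≤ T.card ∧ d - tElem T s < j) := by
  simp only [JofT, triIdx, Finset.mem_filter, Finset.mem_product, Finset.mem_Icc]
  omega

lemma image_tElem {d : ℕ} {T : Finset ℕ} (hT : T ⊆ Finset.Icc 1 d) :
    (Finset.Icc 1 T.card).image (tElem T) = T := by
  ext m
  simp only [Finset.mem_image, Finset.mem_Icc]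
  constructor
  · rintro ⟨i, ⟨h1, h2⟩, rfl⟩; exact tElem_mem h1 h2
  · intro hm
    obtain ⟨i, h1, h2, h3⟩ := exists_tElem hm
    exact ⟨i, ⟨h1, h2⟩, h3⟩

lemma card_JofT {d : ℕ} {T : Finset ℕ} (hT : T ⊆ Finset.Icc 1 d) :
    (JofT d T).card = ∑ t ∈ T, t := by
  have hrow : JofT d T = (Finset.Icc 1 T.card).biUnion
      (fun i => {i} ×ˢ Finset.Icc (d - tElem T i + 1) d) := by
    ext ⟨s, j⟩
    simp only [Finset.mem_biUnion, Finset.mem_Icc, Finset.mem_product,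
      Finset.mem_singleton, mem_JofT]
    constructor
    · intro ⟨h1, h2, h3, h4, h5⟩
      exact ⟨s, ⟨h1, h4⟩, rfl, by omega, h3⟩
    · rintro ⟨i, ⟨h1, h2⟩, he, h3, h4⟩
      subst he
      have hb := tElem_add_le hT s h1 h2
      have h0 := one_le_tElem hT h1 h2
      exact ⟨h1, by omega, h4, h2, by omega⟩
  rw [hrow, Finset.card_biUnion]
  · have : ∀ i ∈ Finset.Icc 1 T.card,
        ({i} ×ˢ Finset.Icc (d - tElem T i + 1) d).card = tElem T i := by
      intro i hi
      rw [Finset.mem_Icc] at hi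
      have hb := tElem_add_le hT i hi.1 hi.2
      have h0 := one_le_tElem hT hi.1 hi.2
      rw [Finset.card_product, Finset.card_singleton, Nat.card_Icc]
      omega
    rw [Finset.sum_congr rfl this]
    have hinj : ∀ x ∈ Finset.Icc 1 T.card, ∀ y ∈ Finset.Icc 1 T.card,
        tElem T x = tElem T y → x = y := by
      intro x hx y hy hxy
      rw [Finset.mem_Icc] at hx hy
      by_contra hne
      rcases Nat.lt_or_ge x y with h | h
      · exact absurd hxy (Nat.ne_of_gt (tElem_lt_tElem hx.1 h hy.2))
      · exact absurd hxy (Nat.ne_of_lt (tElem_lt_tElem hy.1 (by omega) hx.2))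
    conv_rhs => rw [← image_tElem hT]
    exact (Finset.sum_image (f := fun m => m) hinj).symm
  · intro x hx y hy hxy
    simp only [Finset.disjoint_left]
    rintro ⟨a, c⟩ ha hb
    simp only [Finset.mem_product, Finset.mem_singleton] at ha hb
    exact hxy (ha.1 ▸ hb.1 ▸ rfl)

lemma gauss (k : ℕ) : ∑ i ∈ Finset.Icc 1 k, (i : ℝ) = k * (k + 1) / 2 := by
  induction k with
  | zero => simp
  | succ n ih =>
    rw [Finset.sum_Icc_succ_top (by omega), ih]
    push_cast; ring

/-- Computation of `S_T(μ⃗_r)` and `S_T(δ⃗)`: evaluating the linear forms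
`q ↦ ⟨q, μ⃗_r⟩` and `q ↦ ⟨q, δ⃗⟩` at the indicator vector `q` of the admissible
subset `J(T)` gives `b·𝟙_T(d+1−r) − 𝟙[#T ≥ r]` and
`b·(∑_{t∈T} t − #T(#T+1)/2) − #T·(d−#T)` respectively. -/
theorem ST_mu_and_ST_delta (d : ℕ) (hd : 1 ≤ d) (b : ℝ) (r : ℕ)
    (hr1 : 1 ≤ r) (hrd : r ≤ d) (T : Finset ℕ) (hT : T ⊆ Finset.Icc 1 d)
    (q : ℕ → ℕ → ℝ)
    (hq : ∀ i j, q i j = if (i, j) ∈ JofT d T then 1 else 0) :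
    (b * q r r - q r d + b * ∑ s ∈ Finset.Ico 1 r, (q s r - q s (r - 1)) =
      b * (if d + 1 - r ∈ T then (1 : ℝ) else 0) -
        (if r ≤ T.card then (1 : ℝ) else 0)) ∧
    (b * (∑ p ∈ triIdx d, q p.1 p.2) +
        ∑ i ∈ Finset.Icc 1 d, (2 * (i : ℝ) - 1 - d - b * i) * q i d =
      b * ((∑ t ∈ T, (t : ℝ)) - T.card * (T.card + 1) / 2) -
        T.card * ((d : ℝ) - T.card)) := by
  have hkd : T.card ≤ d := by
    have := Finset.card_le_card hT
    simpa [Nat.card_Icc] using this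
  constructor
  · have e1 : q r d = if r ≤ T.card then (1:ℝ) else 0 := by
      rw [hq]
      by_cases h : r ≤ T.card
      · have h1 := one_le_tElem hT hr1 h
        rw [if_pos (mem_JofT.2 ⟨hr1, hrd, le_rfl, h, by omega⟩), if_pos h]
      · rw [if_neg (fun hc => h (mem_JofT.1 hc).2.2.2.1), if_neg h]
    have e0 : q r (r-1) = 0 := by
      rw [hq, if_neg]
      intro hc
      have := (mem_JofT.1 hc).2.1
      omega
    have key : ∀ s, 1 ≤ s → s ≤ r →
        q s r - q s (r-1) = if s ≤ T.card ∧ tElem T s = d + 1 - r then (1:ℝ) else 0 := by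
      intro s hs hsr
      rw [hq, hq]
      by_cases hsk : s ≤ T.card
      · have h1 := one_le_tElem hT hs hsk
        have h2 := tElem_add_le hT s hs hsk
        simp only [mem_JofT]
        split_ifs <;> first | (exfalso; omega) | norm_num
      · simp only [mem_JofT]
        split_ifs <;> first | (exfalso; omega) | norm_num
    have e2 : q r r + ∑ s ∈ Finset.Ico 1 r, (q s r - q s (r-1)) =
        if d + 1 - r ∈ T then (1:ℝ) else 0 := by
      have estep : q r r + ∑ s ∈ Finset.Ico 1 r, (q s r - q s (r-1))
          = ∑ s ∈ Finset.Ico 1 (r+1), (q s r - q s (r-1)) := by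
        rw [Finset.sum_Ico_succ_top hr1, e0]; ring
      have e3 : ∑ s ∈ Finset.Ico 1 (r+1), (q s r - q s (r-1))
          = ∑ s ∈ Finset.Ico 1 (r+1),
              (if s ≤ T.card ∧ tElem T s = d + 1 - r then (1:ℝ) else 0) :=
        Finset.sum_congr rfl (fun s hs => by
          rw [Finset.mem_Ico] at hs; exact key s hs.1 (by omega))
      rw [estep, e3, Finset.sum_boole]
      by_cases hm : d + 1 - r ∈ T
      · obtain ⟨i, hi1, hi2, hi3⟩ := exists_tElem hm
        have hb := tElem_add_le hT i hi1 hi2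
        have hfil : (Finset.Ico 1 (r+1)).filter
            (fun s => s ≤ T.card ∧ tElem T s = d + 1 - r) = {i} := by
          ext s
          simp only [Finset.mem_filter, Finset.mem_Ico, Finset.mem_singleton]
          constructor
          · rintro ⟨⟨hs1, hs2⟩, hsk, hst⟩
            by_contra hne
            rcases Nat.lt_or_ge s i with h | h
            · have := tElem_lt_tElem hs1 h hi2; omega
            · have := tElem_lt_tElem hi1 (by omega) hsk; omega
          · rintro rfl
            exact ⟨⟨hi1, by omega⟩, hi2, hi3⟩
        rw [hfil, if_pos hm]; simp
      · have hfil : (Finset.Ico 1 (r+1)).filter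
            (fun s => s ≤ T.card ∧ tElem T s = d + 1 - r) = ∅ := by
          rw [Finset.filter_eq_empty_iff]
          rintro s hs ⟨hsk, hst⟩
          rw [Finset.mem_Ico] at hs
          exact hm (hst ▸ tElem_mem hs.1 hsk)
        rw [hfil, if_neg hm]; simp
    rw [e1]
    linear_combination b * e2
  · have eA : ∑ p ∈ triIdx d, q p.1 p.2 = ((JofT d T).card : ℝ) := by
      have hsub : JofT d T ⊆ triIdx d := Finset.filter_subset _ _
      rw [Finset.sum_congr rfl (fun p _ => hq p.1 p.2), Finset.sum_boole,
        Finset.filter_mem_eq_inter, Finset.inter_eq_right.2 hsub]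
    have eB : ∀ i ∈ Finset.Icc 1 d, (2*(i:ℝ)-1-(d:ℝ)-b*i) * q i d
        = if i ≤ T.card then (2*(i:ℝ)-1-(d:ℝ)-b*i) else 0 := by
      intro i hi
      rw [Finset.mem_Icc] at hi
      rw [hq]
      by_cases h : i ≤ T.card
      · have h1 := one_le_tElem hT hi.1 h
        rw [if_pos (mem_JofT.2 ⟨hi.1, hi.2, le_rfl, h, by omega⟩), if_pos h, mul_one]
      · rw [if_neg (fun hc => h (mem_JofT.1 hc).2.2.2.1), if_neg h, mul_zero]
    have hfil : (Finset.Icc 1 d).filter (fun i => i ≤ T.card) = Finset.Icc 1 T.card := by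
      ext i
      simp only [Finset.mem_filter, Finset.mem_Icc]
      omega
    have eC : ∑ i ∈ Finset.Icc 1 T.card, (2*(i:ℝ)-1-(d:ℝ)-b*i)
        = (2-b) * ((T.card:ℝ)*(T.card+1)/2) - (1+(d:ℝ))*(T.card:ℝ) := by
      rw [Finset.sum_congr rfl (fun i _ => by ring :
          ∀ i ∈ Finset.Icc 1 T.card, (2*(i:ℝ)-1-(d:ℝ)-b*i) = (2-b)*(i:ℝ) - (1+(d:ℝ))),
        Finset.sum_sub_distrib, ← Finset.mul_sum, gauss, Finset.sum_const,
        Nat.card_Icc, nsmul_eq_mul]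
      push_cast
      ring
    rw [eA, card_JofT hT, Finset.sum_congr rfl eB, ← Finset.sum_filter, hfil, eC]
    push_cast
    ring
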